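/- Let A(z) = −3/(4(1−z)²) for z in the open unit disc 𝔻 (A is analytic on 𝔻). Then every non-trivial solution of f'' + A f = 0 has at most one zero in 𝔻, and |A(x)|(1−x²)² → 3 as x → 1⁻ along the real axis. -/

import Mathlib

open Complex Metric Filter Topology

noncomputable def sq13 (z : ℂ) : ℂ := (1 - z) ^ ((2:ℂ)⁻¹)

lemma sq13_slit {z : ℂ} (hz : z ∈ ball (0:ℂ) 1) : (1 - z) ∈ Complex.slitPlane := by
  left
  have h1 : z.re ≤ ‖z‖ := Complex.re_le_norm z
  have h2 : ‖z‖ < 1 := by simpa using mem_ball_zero_iff.mp hz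
  simp only [Complex.sub_re, Complex.one_re]
  linarith

lemma sq13_sq {z : ℂ} (hz : z ∈ ball (0:ℂ) 1) : sq13 z ^ 2 = 1 - z := by
  have := Complex.cpow_nat_inv_pow (1 - z) (n := 2) two_ne_zero
  simpa [sq13] using this

lemma sq13_ne {z : ℂ} (hz : z ∈ ball (0:ℂ) 1) : sq13 z ≠ 0 := by
  have h1 : (1:ℂ) - z ≠ 0 := by
    intro h
    have : z = 1 := by linear_combination -h
    simp [this] at hz
  intro h
  rw [← sq13_sq hz] at h1
  simp [h] at h1

lemma sq13_hasDeriv {z : ℂ} (hz : z ∈ ball (0:ℂ) 1) :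
    HasDerivAt sq13 (-(2 * sq13 z)⁻¹) z := by
  have hdiff : DifferentiableAt ℂ sq13 z :=
    (((differentiable_const (1:ℂ)).sub differentiable_id).differentiableAt).cpow
      (differentiableAt_const _) (sq13_slit hz)
  have hd := hdiff.hasDerivAt
  have hsq : HasDerivAt (fun w => sq13 w ^ 2) (2 * sq13 z ^ 1 * deriv sq13 z) z := by
    simpa using hd.fun_pow 2
  have heq : (fun w => sq13 w ^ 2) =ᶠ[𝓝 z] (fun w => 1 - w) := by
    filter_upwards [isOpen_ball.mem_nhds hz] with w hw using sq13_sq hw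
  have h1 : HasDerivAt (fun w : ℂ => 1 - w) (2 * sq13 z ^ 1 * deriv sq13 z) z :=
    hsq.congr_of_eventuallyEq heq.symm
  have h2 : HasDerivAt (fun w : ℂ => 1 - w) (-1) z := by
    simpa using (hasDerivAt_id z).const_sub 1
  have key : 2 * sq13 z ^ 1 * deriv sq13 z = -1 := h1.unique h2
  have : deriv sq13 z = -(2 * sq13 z)⁻¹ := by
    have hne := sq13_ne hz
    field_simp at key ⊢
    linear_combination key
  rwa [this] at hd

lemma f1_hasDeriv {z : ℂ} (hz : z ∈ ball (0:ℂ) 1) :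
    HasDerivAt (fun w => sq13 w ^ 3) (-(3/2) * sq13 z) z := by
  have h := (sq13_hasDeriv hz).fun_pow 3
  have hne := sq13_ne hz
  refine h.congr_deriv (Eq.symm ?_)
  field_simp
  ring

lemma g1_hasDeriv {z : ℂ} (hz : z ∈ ball (0:ℂ) 1) :
    HasDerivAt (fun w => -(3/2) * sq13 w) (3 / (4 * sq13 z)) z := by
  have h := (sq13_hasDeriv hz).const_mul (-(3/2) : ℂ)
  have hne := sq13_ne hz
  refine h.congr_deriv (Eq.symm ?_)
  field_simp
  ring

lemma f2_hasDeriv {z : ℂ} (hz : z ∈ ball (0:ℂ) 1) :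
    HasDerivAt (fun w => (sq13 w)⁻¹) ((2 * sq13 z ^ 3)⁻¹) z := by
  have hne := sq13_ne hz
  have h := (sq13_hasDeriv hz).inv hne
  refine h.congr_deriv (Eq.symm ?_)
  field_simp

lemma g2_hasDeriv {z : ℂ} (hz : z ∈ ball (0:ℂ) 1) :
    HasDerivAt (fun w => (2 * sq13 w ^ 3)⁻¹) (3 / (4 * sq13 z ^ 5)) z := by
  have hne := sq13_ne hz
  have h := (((sq13_hasDeriv hz).fun_pow 3).const_mul (2:ℂ)).inv (by
    simp [hne, pow_eq_zero_iff])
  refine h.congr_deriv (Eq.symm ?_)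
  field_simp
  ring

lemma const13 {w : ℂ → ℂ} (h : ∀ z ∈ ball (0:ℂ) 1, HasDerivAt w 0 z) :
    ∀ z ∈ ball (0:ℂ) 1, w z = w 0 := by
  intro z hz
  have h0 : (0:ℂ) ∈ ball (0:ℂ) 1 := by simp
  refine (convex_ball (0:ℂ) 1).is_const_of_fderivWithin_eq_zero
    (fun x hx => ((h x hx).differentiableAt).differentiableWithinAt) ?_ hz h0
  intro x hx
  rw [fderivWithin_of_isOpen isOpen_ball hx]
  have : deriv w x = 0 := (h x hx).deriv
  ext
  simp [((h x hx).differentiableAt).hasFDerivAt.fderiv, ContinuousLinearMap.smulRight_apply, this]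

/-- For `A(z) = −3/(4(1−z)²)` on `𝔻`, every non-trivial analytic solution
of `f'' + A f = 0` has at most one zero in `𝔻`, and `|A(x)|(1−x²)² → 3` as `x → 1⁻`
along the real axis. -/
theorem stmt_13 (A : ℂ → ℂ) (hA : ∀ z ∈ ball (0:ℂ) 1, A z = -3 / (4 * (1 - z) ^ 2)) :
    (∀ f : ℂ → ℂ, AnalyticOnNhd ℂ f (ball (0:ℂ) 1) →
      (∀ z ∈ ball (0:ℂ) 1, deriv (deriv f) z + A z * f z = 0) →
      ¬ (∀ z ∈ ball (0:ℂ) 1, f z = 0) →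
      ∀ z₁ ∈ ball (0:ℂ) 1, ∀ z₂ ∈ ball (0:ℂ) 1, f z₁ = 0 → f z₂ = 0 → z₁ = z₂) ∧
    Tendsto (fun x : ℝ => ‖A (x : ℂ)‖ * (1 - x ^ 2) ^ 2)
      (𝓝[<] (1:ℝ)) (𝓝 3) := by
  constructor
  · intro f hf hode hnt z₁ hz₁ z₂ hz₂ hfz₁ hfz₂
    have hf' : AnalyticOnNhd ℂ (deriv f) (ball (0:ℂ) 1) := hf.deriv
    have hdd : ∀ z ∈ ball (0:ℂ) 1,
        deriv (deriv f) z = 3 * f z / (4 * sq13 z ^ 4) := by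
      intro z hz
      have h := hode z hz
      rw [hA z hz, ← sq13_sq hz] at h
      have hne := sq13_ne hz
      field_simp at h ⊢
      linear_combination h
    set w₁ : ℂ → ℂ := fun w => f w * (-(3/2) * sq13 w) - deriv f w * sq13 w ^ 3 with hw₁
    set w₂ : ℂ → ℂ := fun w => f w * (2 * sq13 w ^ 3)⁻¹ - deriv f w * (sq13 w)⁻¹ with hw₂
    have hderiv1 : ∀ z ∈ ball (0:ℂ) 1, HasDerivAt w₁ 0 z := by
      intro z hz
      have hne := sq13_ne hz
      have hfd : HasDerivAt f (deriv f z) z := ((hf z hz).differentiableAt).hasDerivAt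
      have hffd : HasDerivAt (deriv f) (deriv (deriv f) z) z :=
        ((hf' z hz).differentiableAt).hasDerivAt
      have h := (hfd.fun_mul (g1_hasDeriv hz)).fun_sub (hffd.fun_mul (f1_hasDeriv hz))
      refine h.congr_deriv (Eq.symm ?_)
      rw [hdd z hz]
      field_simp
      ring
    have hderiv2 : ∀ z ∈ ball (0:ℂ) 1, HasDerivAt w₂ 0 z := by
      intro z hz
      have hne := sq13_ne hz
      have hfd : HasDerivAt f (deriv f z) z := ((hf z hz).differentiableAt).hasDerivAt
      have hffd : HasDerivAt (deriv f) (deriv (deriv f) z) z :=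
        ((hf' z hz).differentiableAt).hasDerivAt
      have h := (hfd.fun_mul (g2_hasDeriv hz)).fun_sub (hffd.fun_mul (f2_hasDeriv hz))
      refine h.congr_deriv (Eq.symm ?_)
      rw [hdd z hz, eq_comm, sub_eq_zero]
      ring
    obtain ⟨a, hc1⟩ : ∃ a, ∀ z ∈ ball (0:ℂ) 1, w₁ z = a := ⟨w₁ 0, const13 hderiv1⟩
    obtain ⟨b, hc2⟩ : ∃ b, ∀ z ∈ ball (0:ℂ) 1, w₂ z = b := ⟨w₂ 0, const13 hderiv2⟩
    have hrep : ∀ z ∈ ball (0:ℂ) 1, 2 * f z = sq13 z ^ 3 * b - (sq13 z)⁻¹ * a := by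
      intro z hz
      have hne := sq13_ne hz
      have h1 : f z * (-(3/2) * sq13 z) - deriv f z * sq13 z ^ 3 = a := hc1 z hz
      have h2 : f z * (2 * sq13 z ^ 3)⁻¹ - deriv f z * (sq13 z)⁻¹ = b := hc2 z hz
      field_simp at h1 h2 ⊢
      linear_combination (sq13 z * h2 - h1) / 2
    have hzero : ∀ z ∈ ball (0:ℂ) 1, f z = 0 → (1 - z) ^ 2 * b = a := by
      intro z hz h0
      have hne := sq13_ne hz
      have h := hrep z hz
      rw [h0] at h
      rw [← sq13_sq hz]
      field_simp at h
      linear_combination -h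
    have hab : ¬ (a = 0 ∧ b = 0) := by
      rintro ⟨ha0, hb0⟩
      exact hnt (fun z hz => by
        have h := hrep z hz
        rw [ha0, hb0] at h
        simpa using h)
    have e1 := hzero z₁ hz₁ hfz₁
    have e2 := hzero z₂ hz₂ hfz₂
    by_cases hb0 : b = 0
    · exfalso
      exact hab ⟨by rw [← e1, hb0]; ring, hb0⟩
    · have hsq : (1 - z₁) ^ 2 = (1 - z₂) ^ 2 :=
        mul_right_cancel₀ hb0 (e1.trans e2.symm)
      have hfac : (z₂ - z₁) * (2 - z₁ - z₂) = 0 := by linear_combination hsq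
      rcases mul_eq_zero.mp hfac with h | h
      · linear_combination -h
      · exfalso
        have hr1 : z₁.re < 1 := by
          have := (Complex.re_le_norm z₁).trans_lt
            (by simpa using mem_ball_zero_iff.mp hz₁)
          linarith
        have hr2 : z₂.re < 1 := by
          have := (Complex.re_le_norm z₂).trans_lt
            (by simpa using mem_ball_zero_iff.mp hz₂)
          linarith
        have h2 : (2 - z₁ - z₂).re = 0 := by rw [h]; simp
        simp only [Complex.sub_re] at h2
        norm_num at h2
        linarith
  · have hev : ∀ᶠ x in 𝓝[<] (1:ℝ),
        ‖A (x : ℝ)‖ * (1 - x ^ 2) ^ 2 = 3 * (1 + x) ^ 2 / 4 := by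
      filter_upwards [Ioo_mem_nhdsLT_of_mem (by norm_num : (1:ℝ) ∈ Set.Ioc (0:ℝ) 1)]
        with x hx
      have hball : (x : ℂ) ∈ ball (0:ℂ) 1 := by
        simp only [mem_ball_zero_iff, Complex.norm_real, Real.norm_eq_abs]
        rw [abs_lt]; constructor <;> [linarith [hx.1]; exact hx.2]
      rw [hA _ hball]
      have h1 : ((1:ℂ) - (x:ℂ)) = ((1 - x : ℝ) : ℂ) := by push_cast; ring
      rw [h1, norm_div, norm_mul]
      simp only [Complex.norm_ofNat, Complex.norm_real, Real.norm_eq_abs, norm_pow]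
      rw [show ‖(-3 : ℂ)‖ = 3 by simp]
      rw [_root_.abs_of_nonneg (by linarith [hx.2] : (0:ℝ) ≤ 1 - x)]
      have hne : (1 - x) ≠ 0 := by linarith [hx.2]
      field_simp
      ring
    have hc : Tendsto (fun x : ℝ => 3 * (1 + x) ^ 2 / 4) (𝓝[<] (1:ℝ)) (𝓝 3) := by
      have := (Continuous.tendsto (by continuity : Continuous fun x : ℝ => 3 * (1 + x) ^ 2 / 4) 1)
      have h3 : (3 : ℝ) * (1 + 1) ^ 2 / 4 = 3 := by norm_num
      rw [h3] at this
      exact this.mono_left nhdsWithin_le_nhds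
    exact hc.congr' (hev.mono fun x hx => hx.symm)
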